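/- Let p ∈ [2, ∞), λ > 0, and let E : ℝ^M × ℝ^M → ℝ≥0 be convex and differentiable in its second argument with y ↦ ∇_f E(y, ν(f)) Lipschitz in y with constant K (uniformly in f ∈ ℝ^N), where ν : ℝ^N → ℝ^M is linear. Suppose f_{y₁}, f_{y₂} ∈ ℝ^N are minimizers of f ↦ E(y_i, ν f) + λ‖f‖_p^p for y₁, y₂ ∈ ℝ^M respectively. Then ‖f_{y₁} - f_{y₂}‖_p ≤ (2^{p-2} K/(λ p))^{1/(p-1)} · ‖y₁ - y₂‖₂^{1/(p-1)}. -/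

import Mathlib

open Real Finset

namespace LpHolderAux

variable {p : ℝ}

lemma sq_rpow (x : ℝ) (a : ℝ) : ((x ^ 2 : ℝ)) ^ a = |x| ^ (2 * a) := by
  rw [← sq_abs, ← Real.rpow_natCast |x| 2, ← Real.rpow_mul (abs_nonneg x)]
  norm_num

lemma hasDerivAt_abs_rpow (hp : 2 ≤ p) (x : ℝ) :
    HasDerivAt (fun x : ℝ => |x| ^ p) (p * (x * |x| ^ (p - 2))) x := by
  have hfun : (fun x : ℝ => |x| ^ p) = fun x : ℝ => (x ^ 2) ^ (p / 2) := by
    funext y; rw [sq_rpow, show 2 * (p / 2) = p by ring]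
  have hbase : HasDerivAt (fun y : ℝ => y ^ 2) (2 * x) x := by
    simpa using hasDerivAt_pow 2 x
  have hc : HasDerivAt (fun y : ℝ => (y ^ 2) ^ (p / 2)) (2 * x * (p / 2) * (x ^ 2) ^ (p / 2 - 1)) x :=
    hbase.rpow_const (Or.inr (by linarith))
  have hv : ((x : ℝ) ^ 2) ^ (p / 2 - 1) = |x| ^ (p - 2) := by
    rw [sq_rpow, show 2 * (p / 2 - 1) = p - 2 by ring]
  have hval : 2 * x * (p / 2) * (x ^ 2) ^ (p / 2 - 1) = p * (x * |x| ^ (p - 2)) := by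
    rw [hv]; ring
  rw [hfun]
  exact hval ▸ hc

lemma g_nonneg_eq (hp : 2 ≤ p) {x : ℝ} (hx : 0 ≤ x) :
    x * |x| ^ (p - 2) = x ^ (p - 1) := by
  rcases hx.eq_or_lt with h | h
  · rw [← h, Real.zero_rpow (by linarith : p - 1 ≠ 0), zero_mul]
  · rw [abs_of_pos h, show p - 1 = p - 2 + 1 by ring, Real.rpow_add_one h.ne', mul_comm]

lemma g_odd (x : ℝ) : (-x) * |(-x)| ^ (p - 2) = -(x * |x| ^ (p - 2)) := by
  rw [abs_neg]; ring

lemma rpow_superadd {a b q : ℝ} (ha : 0 ≤ a) (hb : 0 ≤ b) (hq : 1 ≤ q) :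
    a ^ q + b ^ q ≤ (a + b) ^ q := by
  have hq0 : q ≠ 0 := by linarith
  have hab : 0 ≤ a + b := by linarith
  have h1 : ∀ c : ℝ, 0 ≤ c → c ≤ a + b → c ^ q ≤ c * (a + b) ^ (q - 1) := by
    intro c hc hcab
    rcases hc.eq_or_lt with h | h
    · rw [← h, Real.zero_rpow hq0, zero_mul]
    · have e2 := Real.rpow_add_one h.ne' (q - 1)
      rw [show q - 1 + 1 = q by ring] at e2
      calc c ^ q = c * c ^ (q - 1) := by rw [e2]; ring
        _ ≤ c * (a + b) ^ (q - 1) := by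
            exact mul_le_mul_of_nonneg_left
              (Real.rpow_le_rpow hc hcab (by linarith)) hc
  have h3 : a * (a + b) ^ (q - 1) + b * (a + b) ^ (q - 1) = (a + b) ^ q := by
    rcases hab.eq_or_lt with h | h
    · rw [← h, Real.zero_rpow hq0]
      have ha0 : a = 0 := by linarith
      have hb0 : b = 0 := by linarith
      rw [ha0, hb0]; ring
    · rw [show q = q - 1 + 1 by ring, Real.rpow_add_one h.ne']; ring
  have := h1 a ha (by linarith)
  have := h1 b hb (by linarith)
  linarith

lemma key_half (hp : 2 ≤ p) {m r : ℝ} (hm : 0 ≤ m) (hr : 0 ≤ r) :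
    2 * r ^ (p - 1) ≤ (m + r) * |m + r| ^ (p - 2) - (m - r) * |m - r| ^ (p - 2) := by
  have hp1 : (1 : ℝ) ≤ p - 1 := by linarith
  rcases le_or_gt r m with h | h
  · rw [g_nonneg_eq hp (by linarith : (0:ℝ) ≤ m + r),
      g_nonneg_eq hp (by linarith : (0:ℝ) ≤ m - r)]
    have hs := rpow_superadd (show (0:ℝ) ≤ m - r by linarith)
      (show (0:ℝ) ≤ 2 * r by linarith) hp1
    rw [show m - r + 2 * r = m + r by ring] at hs
    have h2 : 2 * r ^ (p - 1) ≤ (2 * r) ^ (p - 1) := by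
      rw [Real.mul_rpow (by norm_num) hr]
      have h21 : (2 : ℝ) ≤ 2 ^ (p - 1) := by
        calc (2 : ℝ) = 2 ^ (1 : ℝ) := (Real.rpow_one 2).symm
          _ ≤ 2 ^ (p - 1) := Real.rpow_le_rpow_of_exponent_le (by norm_num) hp1
      exact mul_le_mul_of_nonneg_right h21 (Real.rpow_nonneg hr _)
    linarith
  · rw [g_nonneg_eq hp (by linarith : (0:ℝ) ≤ m + r),
      show m - r = -(r - m) by ring, g_odd,
      g_nonneg_eq hp (by linarith : (0:ℝ) ≤ r - m)]
    have hc := convexOn_rpow (p := p - 1) hp1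
    have hcv := hc.2 (show (m + r) ∈ Set.Ici (0:ℝ) by simp; linarith)
      (show (r - m) ∈ Set.Ici (0:ℝ) by simp; linarith)
      (by norm_num : (0:ℝ) ≤ 1/2) (by norm_num : (0:ℝ) ≤ 1/2) (by norm_num)
    rw [smul_eq_mul, smul_eq_mul, smul_eq_mul, smul_eq_mul,
      show (1/2 : ℝ) * (m + r) + (1/2) * (r - m) = r by ring] at hcv
    linarith

lemma key_aux (hp : 2 ≤ p) {x y : ℝ} (hxy : y ≤ x) :
    2 ^ (2 - p) * |x - y| ^ p ≤ (x * |x| ^ (p - 2) - y * |y| ^ (p - 2)) * (x - y) := by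
  have H : 2 * ((x - y) / 2) ^ (p - 1) ≤ x * |x| ^ (p - 2) - y * |y| ^ (p - 2) := by
    rcases le_or_gt 0 ((x + y) / 2) with hm | hm
    · have hh := key_half hp hm (show (0:ℝ) ≤ (x - y) / 2 by linarith)
      rw [show (x + y) / 2 + (x - y) / 2 = x by ring,
        show (x + y) / 2 - (x - y) / 2 = y by ring] at hh
      exact hh
    · have hh := key_half hp (show (0:ℝ) ≤ -((x + y) / 2) by linarith)
        (show (0:ℝ) ≤ (x - y) / 2 by linarith)
      rw [show -((x + y) / 2) + (x - y) / 2 = -y by ring,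
        show -((x + y) / 2) - (x - y) / 2 = -x by ring, g_odd, g_odd] at hh
      linarith
  rcases hxy.eq_or_lt with h | h
  · rw [h, sub_self, abs_zero, Real.zero_rpow (by linarith : p ≠ 0), mul_zero, mul_zero]
  · have hxy0 : 0 < x - y := by linarith
    have hne : ((x - y) : ℝ) / 2 ≠ 0 := ne_of_gt (by linarith : (0:ℝ) < (x - y) / 2)
    have e1 : (x - y) ^ p = 2 ^ p * ((x - y) / 2) ^ p := by
      conv_lhs => rw [show x - y = 2 * ((x - y) / 2) by ring]
      rw [Real.mul_rpow (by norm_num) (by linarith : (0:ℝ) ≤ (x - y)/2)]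
    have e2 := Real.rpow_add_one hne (p - 1)
    rw [show p - 1 + 1 = p by ring] at e2
    have e3 : (2:ℝ) ^ (2 - p) * 2 ^ p = 4 := by
      rw [← Real.rpow_add (by norm_num : (0:ℝ) < 2),
        show (2:ℝ) - p + p = ((2:ℕ):ℝ) by push_cast; ring, Real.rpow_natCast]
      norm_num
    have hLHS : 2 ^ (2 - p) * |x - y| ^ p
        = (2 * ((x - y) / 2) ^ (p - 1)) * (x - y) := by
      calc 2 ^ (2 - p) * |x - y| ^ p
          = 2 ^ (2 - p) * 2 ^ p * ((x - y) / 2) ^ p := by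
            rw [abs_of_pos hxy0, e1]; ring
        _ = 4 * (((x - y) / 2) ^ (p - 1) * ((x - y) / 2)) := by rw [e3, e2]
        _ = (2 * ((x - y) / 2) ^ (p - 1)) * (x - y) := by ring
    rw [hLHS]
    exact mul_le_mul_of_nonneg_right H (le_of_lt hxy0)

lemma key (hp : 2 ≤ p) (x y : ℝ) :
    2 ^ (2 - p) * |x - y| ^ p ≤ (x * |x| ^ (p - 2) - y * |y| ^ (p - 2)) * (x - y) := by
  rcases le_total y x with h | h
  · exact key_aux hp h
  · have hh := key_aux hp h
    rw [abs_sub_comm] at hh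
    have e : (y * |y| ^ (p - 2) - x * |x| ^ (p - 2)) * (y - x)
        = (x * |x| ^ (p - 2) - y * |y| ^ (p - 2)) * (x - y) := by ring
    linarith

end LpHolderAux

open LpHolderAux

/-- Hölder continuity of `ℓ_p`-regularized linear inverse problems for `p ∈ [2,∞)`:
if `E` is nonnegative, convex and differentiable in its second argument with gradient
(of `f ↦ E(y, νf)`) Lipschitz in `y` (in the dual `ℓ_q` norm, uniformly in `f`), and
`f_{y₁}, f_{y₂}` minimize `f ↦ E(y_i, νf) + λ‖f‖_p^p`, then
`‖f_{y₁} - f_{y₂}‖_p ≤ (2^{p-2}K/(λp))^{1/(p-1)} ‖y₁ - y₂‖₂^{1/(p-1)}`. -/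
theorem lp_holder_stability_large_p {M N : ℕ} (p : ℝ) (hp : 2 ≤ p)
    (lam : ℝ) (hlam : 0 < lam)
    (E : (Fin M → ℝ) → (Fin M → ℝ) → ℝ) (hE0 : ∀ y z, 0 ≤ E y z)
    (ν : (Fin N → ℝ) →ₗ[ℝ] (Fin M → ℝ))
    (grad : (Fin M → ℝ) → (Fin N → ℝ) → (Fin N → ℝ))
    (hgrad : ∀ y f, HasFDerivAt (fun f' => E y (ν f'))
      (∑ i, grad y f i • (ContinuousLinearMap.proj i : (Fin N → ℝ) →L[ℝ] ℝ)) f)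
    (hconv : ∀ y, ConvexOn ℝ Set.univ (E y))
    (K : ℝ)
    (hK : ∀ y₁ y₂ : Fin M → ℝ, ∀ f : Fin N → ℝ,
      (∑ i, |grad y₁ f i - grad y₂ f i| ^ (p / (p - 1))) ^ ((p - 1) / p) ≤
        K * Real.sqrt (∑ j, (y₁ j - y₂ j) ^ 2))
    (y₁ y₂ : Fin M → ℝ) (f₁ f₂ : Fin N → ℝ)
    (hf₁ : ∀ f, E y₁ (ν f₁) + lam * ∑ i, |f₁ i| ^ p ≤ E y₁ (ν f) + lam * ∑ i, |f i| ^ p)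
    (hf₂ : ∀ f, E y₂ (ν f₂) + lam * ∑ i, |f₂ i| ^ p ≤ E y₂ (ν f) + lam * ∑ i, |f i| ^ p) :
    (∑ i, |f₁ i - f₂ i| ^ p) ^ (1 / p) ≤
      (2 ^ (p - 2) * K / (lam * p)) ^ (1 / (p - 1)) *
        (Real.sqrt (∑ j, (y₁ j - y₂ j) ^ 2)) ^ (1 / (p - 1)) := by
  have hp0 : (0:ℝ) < p := by linarith
  have hp1 : (1:ℝ) < p := by linarith
  have hpm1 : (0:ℝ) < p - 1 := by linarith
  -- notation
  set S : ℝ := ∑ i, |f₁ i - f₂ i| ^ p with hSdef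
  set R : ℝ := Real.sqrt (∑ j, (y₁ j - y₂ j) ^ 2) with hRdef
  set A : ℝ := S ^ (1 / p) with hAdef
  have hS0 : 0 ≤ S := Finset.sum_nonneg fun i _ => Real.rpow_nonneg (abs_nonneg _) p
  have hA0 : 0 ≤ A := Real.rpow_nonneg hS0 _
  have hR0 : 0 ≤ R := Real.sqrt_nonneg _
  -- Step A: first-order conditions
  have opt : ∀ (y : Fin M → ℝ) (g : Fin N → ℝ),
      (∀ f, E y (ν g) + lam * ∑ i, |g i| ^ p ≤ E y (ν f) + lam * ∑ i, |f i| ^ p) →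
      ∀ j, grad y g j + lam * (p * (g j * |g j| ^ (p - 2))) = 0 := by
    intro y g hg
    have hP : HasFDerivAt (fun f : Fin N → ℝ => ∑ i, |f i| ^ p)
        (∑ i, (p * (g i * |g i| ^ (p - 2))) • (ContinuousLinearMap.proj i : (Fin N → ℝ) →L[ℝ] ℝ)) g :=
      HasFDerivAt.fun_sum fun i _ =>
        (hasDerivAt_abs_rpow hp (g i)).comp_hasFDerivAt (f := fun f : Fin N → ℝ => f i) g (hasFDerivAt_apply i g)
    have hJ : HasFDerivAt (fun f : Fin N → ℝ => E y (ν f) + lam * ∑ i, |f i| ^ p)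
        ((∑ i, grad y g i • (ContinuousLinearMap.proj i : (Fin N → ℝ) →L[ℝ] ℝ)) +
          lam • (∑ i, (p * (g i * |g i| ^ (p - 2))) • (ContinuousLinearMap.proj i : (Fin N → ℝ) →L[ℝ] ℝ))) g :=
      (hgrad y g).add (hP.const_mul lam)
    have hmin : IsLocalMin (fun f : Fin N → ℝ => E y (ν f) + lam * ∑ i, |f i| ^ p) g :=
      Filter.Eventually.of_forall hg
    have hzero := hmin.hasFDerivAt_eq_zero hJ
    intro j
    have h0 := congrArg (fun (L : (Fin N → ℝ) →L[ℝ] ℝ) => L (Pi.single j 1)) hzero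
    simp only [ContinuousLinearMap.add_apply, ContinuousLinearMap.smul_apply,
      ContinuousLinearMap.sum_apply, ContinuousLinearMap.proj_apply, Pi.single_apply,
      ContinuousLinearMap.zero_apply, smul_eq_mul, mul_ite, mul_one, mul_zero,
      Finset.sum_ite_eq', Finset.mem_univ, if_true] at h0
    linarith [h0]
  have optA := opt y₁ f₁ hf₁
  have optB := opt y₂ f₂ hf₂
  -- Step B: monotonicity of the gradient of the convex part
  have mono : ∑ i, grad y₁ f₂ i * (f₁ i - f₂ i) ≤ ∑ i, grad y₁ f₁ i * (f₁ i - f₂ i) := by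
    set φ : ℝ → ℝ := fun t => E y₁ (ν (f₂ + t • (f₁ - f₂))) with hφdef
    have hcurve : ∀ t : ℝ, HasDerivAt (fun t : ℝ => f₂ + t • (f₁ - f₂)) (f₁ - f₂) t := by
      intro t
      simpa using ((hasDerivAt_id t).smul_const (f₁ - f₂)).const_add f₂
    have hφ' : ∀ t : ℝ, HasDerivAt φ
        (∑ i, grad y₁ (f₂ + t • (f₁ - f₂)) i * (f₁ i - f₂ i)) t := by
      intro t
      have h := (hgrad y₁ (f₂ + t • (f₁ - f₂))).comp_hasDerivAt t (hcurve t)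
      simpa [hφdef, Function.comp_def, ContinuousLinearMap.sum_apply, smul_eq_mul] using h
    have hφconv : ConvexOn ℝ Set.univ φ := by
      have h := (hconv y₁).comp_affineMap (AffineMap.lineMap (ν f₂) (ν f₁) : ℝ →ᵃ[ℝ] (Fin M → ℝ))
      have heq : (E y₁ ∘ (AffineMap.lineMap (ν f₂) (ν f₁) : ℝ →ᵃ[ℝ] (Fin M → ℝ))) = φ := by
        funext t
        simp only [Function.comp_apply, hφdef, AffineMap.lineMap_apply, map_add, map_smul, map_sub]
        congr 1
        rw [vsub_eq_sub, vadd_eq_add]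
        module
      rw [heq, Set.preimage_univ] at h
      exact h
    have h0 : HasDerivAt φ (∑ i, grad y₁ f₂ i * (f₁ i - f₂ i)) 0 := by
      have := hφ' 0; simpa using this
    have h1 : HasDerivAt φ (∑ i, grad y₁ f₁ i * (f₁ i - f₂ i)) 1 := by
      have := hφ' 1; simpa using this
    have hle1 := hφconv.le_slope_of_hasDerivAt (Set.mem_univ (0:ℝ)) (Set.mem_univ (1:ℝ)) one_pos h0
    have hle2 := hφconv.slope_le_of_hasDerivAt (Set.mem_univ (0:ℝ)) (Set.mem_univ (1:ℝ)) one_pos h1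
    exact hle1.trans hle2
  -- Hölder inequality
  have hpq : Real.HolderConjugate (p / (p - 1)) p := by
    rw [Real.holderConjugate_iff]
    constructor
    · rw [lt_div_iff₀ hpm1]; linarith
    · rw [inv_div]; field_simp; ring
  -- Step C: the chain of inequalities
  have hchain : lam * p * (2 ^ (2 - p) * S) ≤ K * R * A := by
    have hsum1 : ∀ i, (grad y₂ f₂ i - grad y₁ f₁ i) * (f₁ i - f₂ i)
        = lam * p * (((f₁ i * |f₁ i| ^ (p - 2)) - (f₂ i * |f₂ i| ^ (p - 2))) * (f₁ i - f₂ i)) := by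
      intro i
      linear_combination (f₁ i - f₂ i) * optB i - (f₁ i - f₂ i) * optA i
    calc lam * p * (2 ^ (2 - p) * S)
        = ∑ i, lam * p * (2 ^ (2 - p) * |f₁ i - f₂ i| ^ p) := by
          rw [hSdef, Finset.mul_sum, Finset.mul_sum]
      _ ≤ ∑ i, lam * p * ((f₁ i * |f₁ i| ^ (p - 2) - f₂ i * |f₂ i| ^ (p - 2)) * (f₁ i - f₂ i)) := by
          refine Finset.sum_le_sum fun i _ => ?_
          have := key hp (f₁ i) (f₂ i)
          have hlp : (0:ℝ) ≤ lam * p := by positivity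
          nlinarith [mul_le_mul_of_nonneg_left this hlp]
      _ = ∑ i, (grad y₂ f₂ i - grad y₁ f₁ i) * (f₁ i - f₂ i) := by
          exact Finset.sum_congr rfl fun i _ => (hsum1 i).symm
      _ ≤ ∑ i, (grad y₂ f₂ i - grad y₁ f₂ i) * (f₁ i - f₂ i) := by
          have e1 : ∀ u : Fin N → ℝ, ∑ i, (grad y₂ f₂ i - u i) * (f₁ i - f₂ i)
              = ∑ i, grad y₂ f₂ i * (f₁ i - f₂ i) - ∑ i, u i * (f₁ i - f₂ i) := by
            intro u
            rw [← Finset.sum_sub_distrib]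
            exact Finset.sum_congr rfl fun i _ => by ring
          rw [e1, e1]
          linarith [mono]
      _ ≤ (∑ i, |grad y₂ f₂ i - grad y₁ f₂ i| ^ (p / (p - 1))) ^ ((p - 1) / p) * A := by
          have hH := Real.inner_le_Lp_mul_Lq Finset.univ
            (fun i => grad y₂ f₂ i - grad y₁ f₂ i) (fun i => f₁ i - f₂ i) hpq
          rw [one_div_div] at hH
          exact hH
      _ ≤ K * R * A := by
          have hKK := hK y₂ y₁ f₂
          have hRsym : ∑ j, (y₂ j - y₁ j) ^ 2 = ∑ j, (y₁ j - y₂ j) ^ 2 :=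
            Finset.sum_congr rfl fun j _ => by ring
          rw [hRsym] at hKK
          exact mul_le_mul_of_nonneg_right hKK hA0
  -- conclusion
  have hKR0 : 0 ≤ K * R := by
    have hKK := hK y₂ y₁ f₂
    have hRsym : ∑ j, (y₂ j - y₁ j) ^ 2 = ∑ j, (y₁ j - y₂ j) ^ 2 :=
      Finset.sum_congr rfl fun j _ => by ring
    rw [hRsym] at hKK
    exact le_trans (Real.rpow_nonneg (Finset.sum_nonneg fun i _ =>
      Real.rpow_nonneg (abs_nonneg _) _) _) hKK
  rcases hA0.eq_or_lt with hAz | hApos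
  · rw [← hAz]
    rcases hR0.eq_or_lt with hRz | hRpos
    · rw [← hRz, Real.zero_rpow (by positivity : 1 / (p - 1) ≠ 0), mul_zero]
    · have hK0 : 0 ≤ K := nonneg_of_mul_nonneg_right (by linarith [hKR0] : 0 ≤ R * K) hRpos
      have hC0 : 0 ≤ 2 ^ (p - 2) * K / (lam * p) := by positivity
      positivity
  · -- A > 0
    have hSA : S = A ^ (p - 1) * A := by
      have h1 : A ^ p = S := by
        rw [hAdef, ← Real.rpow_mul hS0, one_div, inv_mul_cancel₀ (ne_of_gt hp0), Real.rpow_one]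
      have h2 := Real.rpow_add_one (ne_of_gt hApos) (p - 1)
      rw [show p - 1 + 1 = p by ring] at h2
      rw [← h1, h2]
    have h2p2 : (0:ℝ) < 2 ^ (p - 2) := Real.rpow_pos_of_pos (by norm_num) _
    have h2m2 : (0:ℝ) < 2 ^ (2 - p) := Real.rpow_pos_of_pos (by norm_num) _
    have hcc : (2:ℝ) ^ (2 - p) * 2 ^ (p - 2) = 1 := by
      rw [← Real.rpow_add (by norm_num : (0:ℝ) < 2), show (2:ℝ) - p + (p - 2) = 0 by ring,
        Real.rpow_zero]
    have h1 : lam * p * (2 ^ (2 - p)) * A ^ (p - 1) ≤ K * R := by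
      apply le_of_mul_le_mul_right _ hApos
      calc lam * p * (2 ^ (2 - p)) * A ^ (p - 1) * A
          = lam * p * (2 ^ (2 - p) * S) := by rw [hSA]; ring
        _ ≤ K * R * A := hchain
    have h2 : A ^ (p - 1) ≤ (2 ^ (p - 2) * K / (lam * p)) * R := by
      rw [div_mul_eq_mul_div, le_div_iff₀ (by positivity : (0:ℝ) < lam * p)]
      have h3 := mul_le_mul_of_nonneg_right h1 (le_of_lt h2p2)
      have h4 : lam * p * (2 ^ (2 - p)) * A ^ (p - 1) * (2 ^ (p - 2))
          = A ^ (p - 1) * (lam * p) := by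
        linear_combination (lam * p * A ^ (p - 1)) * hcc
      linarith
    have hCRpos : 0 < (2 ^ (p - 2) * K / (lam * p)) * R :=
      lt_of_lt_of_le (Real.rpow_pos_of_pos hApos _) h2
    have hRpos : 0 < R := by
      rcases hR0.eq_or_lt with h | h
      · exfalso; rw [← h, mul_zero] at hCRpos; exact lt_irrefl 0 hCRpos
      · exact h
    have hC0 : 0 ≤ 2 ^ (p - 2) * K / (lam * p) := by
      have hd := div_pos hCRpos hRpos
      rw [mul_div_assoc, div_self (ne_of_gt hRpos), mul_one] at hd
      exact hd.le
    have hmono := Real.rpow_le_rpow (Real.rpow_nonneg hA0 _) h2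
      (le_of_lt (by positivity : (0:ℝ) < 1 / (p - 1)))
    rw [Real.mul_rpow hC0 hR0] at hmono
    have hApow : (A ^ (p - 1)) ^ (1 / (p - 1)) = A := by
      rw [← Real.rpow_mul hA0, mul_one_div, div_self (ne_of_gt hpm1), Real.rpow_one]
    rw [hApow] at hmono
    exact hmono
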